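/- Let M and N be Hermitian positive definite n×n complex matrices and μ > 0 a real number. If μ < 1/λ_max(M⁻¹N) (largest eigenvalue of M⁻¹N, which is real and positive), then the matrix μM − μ²N is positive definite; consequently I − μM + μ²N has all eigenvalues strictly less than 1. -/

import Mathlib

open scoped ComplexOrder
open Matrix

/-- spectrum of a Hermitian complex matrix is the image of its eigenvalues -/
lemma herm_spec {n : ℕ} {A : Matrix (Fin n) (Fin n) ℂ} (hA : A.IsHermitian) :
    spectrum ℂ A = Complex.ofReal '' Set.range hA.eigenvalues := by
  exact hA.spectrum_eq_image_range

lemma quad_bound {n : ℕ} {B : Matrix (Fin n) (Fin n) ℂ} (hB : B.IsHermitian)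
    {lam : ℝ} (hlam : ∀ i, hB.eigenvalues i ≤ lam) (y : Fin n → ℂ) :
    (star y ⬝ᵥ B *ᵥ y).re ≤ lam * (star y ⬝ᵥ y).re := by
  set U : Matrix (Fin n) (Fin n) ℂ := ↑hB.eigenvectorUnitary with hUdef
  have hU : U * star U = 1 := Matrix.mem_unitaryGroup_iff.mp hB.eigenvectorUnitary.2
  set w : Fin n → ℂ := star U *ᵥ y with hw
  have hsw : star w = star y ᵥ* U := by
    rw [hw, star_mulVec, Matrix.star_eq_conjTranspose, Matrix.conjTranspose_conjTranspose]
  have h1 : star y ⬝ᵥ B *ᵥ y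
      = star w ⬝ᵥ (Matrix.diagonal (Complex.ofReal ∘ hB.eigenvalues) *ᵥ w) := by
    conv_lhs => rw [hB.spectral_theorem, Unitary.conjStarAlgAut_apply]
    rw [← Matrix.mulVec_mulVec, ← Matrix.mulVec_mulVec, Matrix.dotProduct_mulVec, hsw]
    rfl
  have h2 : star y ⬝ᵥ y = star w ⬝ᵥ w := by
    rw [hsw, hw, ← Matrix.dotProduct_mulVec, Matrix.mulVec_mulVec, hU, Matrix.one_mulVec]
  rw [h1, h2]
  have hterm : ∀ i : Fin n,
      (star w i * (Matrix.diagonal (Complex.ofReal ∘ hB.eigenvalues) *ᵥ w) i).re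
        = hB.eigenvalues i * Complex.normSq (w i) := by
    intro i
    rw [Matrix.mulVec_diagonal]
    simp only [Pi.star_apply, Function.comp_apply, Complex.star_def, Complex.mul_re,
      Complex.mul_im, Complex.conj_re, Complex.conj_im, Complex.ofReal_re, Complex.ofReal_im,
      Complex.normSq_apply]
    ring
  have hterm2 : ∀ i : Fin n, (star w i * w i).re = Complex.normSq (w i) := by
    intro i
    simp only [Pi.star_apply, Complex.star_def, Complex.mul_re, Complex.conj_re,
      Complex.conj_im, Complex.normSq_apply]
    ring
  rw [dotProduct, dotProduct, Complex.re_sum, Complex.re_sum, Finset.mul_sum]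
  apply Finset.sum_le_sum
  intro i _
  rw [hterm i, hterm2 i]
  exact mul_le_mul_of_nonneg_right (hlam i) (Complex.normSq_nonneg _)

/-- If M, N are Hermitian positive definite and 0 < μ < 1/λ_max(M⁻¹N), then
μM − μ²N is positive definite and consequently all eigenvalues of
I − μM + μ²N are strictly less than 1. -/
theorem step_size_stability
    (n : ℕ) (M N : Matrix (Fin n) (Fin n) ℂ)
    (hM : M.PosDef) (hN : N.PosDef) (μ : ℝ) (hμ0 : 0 < μ)
    (hμ : μ < 1 / sSup (Complex.re '' spectrum ℂ (M⁻¹ * N))) :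
    ((μ : ℂ) • M - ((μ : ℂ)) ^ 2 • N).PosDef ∧
    ∀ z ∈ spectrum ℂ
        ((1 : Matrix (Fin n) (Fin n) ℂ) - (μ : ℂ) • M + ((μ : ℂ)) ^ 2 • N),
      z.re < 1 := by
  rcases Nat.eq_zero_or_pos n with hn | hn
  · subst hn
    constructor
    · exact ⟨Subsingleton.elim _ _, fun x hx => absurd (Subsingleton.elim x 0) hx⟩
    · intro z hz
      rw [spectrum.mem_iff] at hz
      exact absurd (isUnit_of_subsingleton _) hz
  haveI : NeZero n := ⟨hn.ne'⟩
  -- square root of M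
  open scoped MatrixOrder in
  set S : Matrix (Fin n) (Fin n) ℂ := CFC.sqrt M with hSdef
  open scoped MatrixOrder in
  have hS : S.PosSemidef := Matrix.nonneg_iff_posSemidef.mp (CFC.sqrt_nonneg M)
  have hSH : S.IsHermitian := hS.1
  open scoped MatrixOrder in
  have hSS : S * S = M := CFC.sqrt_mul_sqrt_self M hM.posSemidef.nonneg
  have hSdet : IsUnit S.det := by
    have hMdet : (0 : ℂ) < M.det := hM.det_pos
    have : S.det * S.det = M.det := by rw [← Matrix.det_mul, hSS]
    have hne : S.det ≠ 0 := by
      intro h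
      rw [h, mul_zero] at this
      exact hMdet.ne' this.symm
    exact hne.isUnit
  have hS1 : S * S⁻¹ = 1 := Matrix.mul_nonsing_inv S hSdet
  have hS2 : S⁻¹ * S = 1 := Matrix.nonsing_inv_mul S hSdet
  have hSinvH : S⁻¹ᴴ = S⁻¹ := by rw [Matrix.conjTranspose_nonsing_inv, hSH.eq]
  set B : Matrix (Fin n) (Fin n) ℂ := S⁻¹ * N * S⁻¹ with hBdef
  have hBH : B.IsHermitian := by
    rw [hBdef]
    rw [Matrix.IsHermitian, Matrix.conjTranspose_mul, Matrix.conjTranspose_mul, hSinvH,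
      hN.1.eq, Matrix.mul_assoc]
  have hBpos : B.PosDef := by
    refine Matrix.PosDef.of_dotProduct_mulVec_pos hBH (fun x hx => ?_)
    have hinj : S⁻¹ *ᵥ x ≠ 0 := by
      intro h
      apply hx
      have := congrArg (S *ᵥ ·) h
      simpa [Matrix.mulVec_mulVec, hS1] using this
    have := hN.dotProduct_mulVec_pos hinj
    convert this using 1
    rw [hBdef, star_mulVec, hSinvH, ← Matrix.dotProduct_mulVec, Matrix.mulVec_mulVec,
      Matrix.mulVec_mulVec, Matrix.mul_assoc]
  -- spectrum equality
  have hMinv : M⁻¹ = S⁻¹ * S⁻¹ := by rw [← hSS, Matrix.mul_inv_rev]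
  have hSU : IsUnit S := (Matrix.isUnit_iff_isUnit_det S).mpr hSdet
  have hspec : spectrum ℂ (M⁻¹ * N) = spectrum ℂ B := by
    have h := spectrum.units_conjugate (R := ℂ) (a := M⁻¹ * N) (u := hSU.unit)
    rw [← h]
    congr 1
    rw [Matrix.coe_units_inv, hSU.unit_spec, hMinv, hBdef]
    simp only [← Matrix.mul_assoc, hS1, one_mul]
  -- the sup of eigenvalues
  set lam : ℝ := sSup (Complex.re '' spectrum ℂ (M⁻¹ * N)) with hlamdef
  have him : Complex.re '' spectrum ℂ (M⁻¹ * N) = Set.range hBH.eigenvalues := by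
    rw [hspec, herm_spec hBH, Set.image_image]
    simp
  have hlam_eq : lam = sSup (Set.range hBH.eigenvalues) := by rw [hlamdef, him]
  have hne : (Set.range hBH.eigenvalues).Nonempty := Set.range_nonempty _
  have hfin : (Set.range hBH.eigenvalues).Finite := Set.finite_range _
  have hmem : lam ∈ Set.range hBH.eigenvalues := hlam_eq ▸ hne.csSup_mem hfin
  obtain ⟨i0, hi0⟩ := hmem
  have hlampos : 0 < lam := hi0 ▸ hBpos.eigenvalues_pos i0
  have hbound : ∀ i, hBH.eigenvalues i ≤ lam := fun i =>
    hlam_eq ▸ le_csSup hfin.bddAbove (Set.mem_range_self i)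
  have hμlam : μ * lam < 1 := (lt_div_iff₀ hlampos).mp hμ
  -- key quadratic inequality
  have hkey : ∀ x : Fin n → ℂ, (star x ⬝ᵥ N *ᵥ x).re ≤ lam * (star x ⬝ᵥ M *ᵥ x).re := by
    intro x
    have h := quad_bound hBH hbound (S *ᵥ x)
    have e1 : star (S *ᵥ x) ⬝ᵥ B *ᵥ (S *ᵥ x) = star x ⬝ᵥ N *ᵥ x := by
      rw [star_mulVec, hSH.eq, ← Matrix.dotProduct_mulVec, Matrix.mulVec_mulVec,
        Matrix.mulVec_mulVec, hBdef]
      simp only [← Matrix.mul_assoc]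
      rw [Matrix.mul_assoc (S * S⁻¹ * N) S⁻¹ S, hS2, Matrix.mul_one, hS1, one_mul]
    have e2 : star (S *ᵥ x) ⬝ᵥ (S *ᵥ x) = star x ⬝ᵥ M *ᵥ x := by
      rw [star_mulVec, hSH.eq, ← Matrix.dotProduct_mulVec, Matrix.mulVec_mulVec, hSS]
    rw [e1, e2] at h
    exact h
  -- positivity of μM - μ²N
  have hApos : ((μ : ℂ) • M - ((μ : ℂ)) ^ 2 • N).PosDef := by
    have hAH : ((μ : ℂ) • M - ((μ : ℂ)) ^ 2 • N).IsHermitian := by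
      rw [Matrix.IsHermitian, Matrix.conjTranspose_sub, Matrix.conjTranspose_smul,
        Matrix.conjTranspose_smul, hM.1.eq, hN.1.eq]
      simp [star_pow, Complex.star_def, Complex.conj_ofReal]
    refine Matrix.PosDef.of_dotProduct_mulVec_pos hAH (fun x hx => ?_)
    have hm := hM.dotProduct_mulVec_pos hx
    have hnn := hN.dotProduct_mulVec_pos hx
    rw [Complex.lt_def] at hm hnn
    obtain ⟨hmre, hmim⟩ := hm
    obtain ⟨hnre, hnim⟩ := hnn
    simp only [Complex.zero_re, Complex.zero_im] at hmre hmim hnre hnim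
    have hk := hkey x
    have hexp : star x ⬝ᵥ ((μ:ℂ) • M - (μ:ℂ)^2 • N) *ᵥ x
        = (μ:ℂ) * (star x ⬝ᵥ M *ᵥ x) - (μ:ℂ)^2 * (star x ⬝ᵥ N *ᵥ x) := by
      rw [Matrix.sub_mulVec, dotProduct_sub, Matrix.smul_mulVec,
        Matrix.smul_mulVec, dotProduct_smul, dotProduct_smul,
        smul_eq_mul, smul_eq_mul]
    rw [hexp, Complex.lt_def]
    constructor
    · have hre : ((μ:ℂ) * (star x ⬝ᵥ M *ᵥ x) - ((μ:ℂ))^2 * (star x ⬝ᵥ N *ᵥ x)).re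
          = μ * (star x ⬝ᵥ M *ᵥ x).re - μ^2 * (star x ⬝ᵥ N *ᵥ x).re := by
        simp only [Complex.sub_re, Complex.mul_re, Complex.mul_im, Complex.ofReal_re,
          Complex.ofReal_im, pow_two]
        ring
      rw [hre, Complex.zero_re]
      nlinarith [mul_le_mul_of_nonneg_left hk (sq_nonneg μ),
        mul_pos (mul_pos hμ0 hmre) (sub_pos.mpr hμlam)]
    · simp only [Complex.zero_im, Complex.sub_im, Complex.mul_im, Complex.mul_re,
        Complex.ofReal_re, Complex.ofReal_im, pow_two, ← hmim, ← hnim]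
      ring
  refine ⟨hApos, ?_⟩
  intro z hz
  have hrw : (1 : Matrix (Fin n) (Fin n) ℂ) - (μ:ℂ) • M + (μ:ℂ)^2 • N
      = (1 : Matrix (Fin n) (Fin n) ℂ) - ((μ:ℂ) • M - (μ:ℂ)^2 • N) := sub_add _ _ _
  rw [hrw] at hz
  rw [show (1 : Matrix (Fin n) (Fin n) ℂ) = algebraMap ℂ (Matrix (Fin n) (Fin n) ℂ) 1 by
      simp] at hz
  rw [← spectrum.singleton_sub_eq] at hz
  obtain ⟨a, ha, b, hb, hab⟩ := Set.mem_sub.mp hz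
  rw [Set.mem_singleton_iff] at ha
  subst ha
  rw [herm_spec hApos.1] at hb
  obtain ⟨r, ⟨i, hi⟩, hr⟩ := hb
  have hev : 0 < r := hi ▸ hApos.eigenvalues_pos i
  rw [← hab, ← hr]
  simp only [Complex.sub_re, Complex.one_re, Complex.ofReal_re]
  linarith
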